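/- Let {B_i} be a sequence of balls in ℝ^k with Lebesgue measure tending to 0, and let {U_i} be Lebesgue measurable sets with U_i ⊆ B_i and μ_k(U_i) ≥ c·μ_k(B_i) for some fixed c > 0 and all i. Then limsup_i U_i and limsup_i B_i have the same k-dimensional Lebesgue measure. -/

import Mathlib

open MeasureTheory Metric Set Filter
open scoped NNReal ENNReal Topology

/-- Beresnevich–Velani lemma: if `Uᵢ ⊆ Bᵢ` are measurable with
`μ(Uᵢ) ≥ c·μ(Bᵢ)` and `μ(Bᵢ) → 0`, then `limsup Uᵢ` and `limsup Bᵢ` have the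
same Lebesgue measure. -/
theorem stmt4 (k : ℕ) (c : ℝ) (hc : 0 < c) (x : ℕ → Fin k → ℝ) (r : ℕ → ℝ)
    (U : ℕ → Set (Fin k → ℝ))
    (htend : Filter.Tendsto (fun i => volume (ball (x i) (r i))) Filter.atTop (nhds 0))
    (hUmeas : ∀ i, MeasurableSet (U i))
    (hsub : ∀ i, U i ⊆ ball (x i) (r i))
    (hmeas : ∀ i, ENNReal.ofReal c * volume (ball (x i) (r i)) ≤ volume (U i)) :
    volume (⋂ N : ℕ, ⋃ i : ℕ, ⋃ _ : N ≤ i, U i) =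
      volume (⋂ N : ℕ, ⋃ i : ℕ, ⋃ _ : N ≤ i, ball (x i) (r i)) := by
  rcases Nat.eq_zero_or_pos k with hk | hk
  · -- degenerate case `k = 0` : balls eventually empty
    subst hk
    have h1 : (1 : ℝ≥0∞) ≠ 0 := one_ne_zero
    have hvuniv : volume (univ : Set (Fin 0 → ℝ)) = 1 := by
      rw [MeasureTheory.volume_pi, Measure.pi_univ]
      simp
    obtain ⟨N₀, hN₀⟩ : ∃ N₀, ∀ i, N₀ ≤ i → volume (ball (x i) (r i)) < 1 := by
      have := htend.eventually_lt_const (by norm_num : (0:ℝ≥0∞) < 1)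
      exact eventually_atTop.mp this
    have hempty : ∀ i, N₀ ≤ i → ball (x i) (r i) = ∅ := by
      intro i hi
      by_contra h
      rcases Set.nonempty_iff_ne_empty.mpr h with ⟨y, hy⟩
      have : ball (x i) (r i) = univ := eq_univ_of_forall fun z => by
        have : z = y := Subsingleton.elim z y
        rwa [this]
      have hvb : volume (ball (x i) (r i)) = 1 := by rw [this, hvuniv]
      exact absurd (hN₀ i hi) (by rw [hvb]; exact lt_irrefl 1)
    have hBempty : (⋂ N : ℕ, ⋃ i : ℕ, ⋃ _ : N ≤ i, ball (x i) (r i)) = ∅ := by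
      apply eq_empty_of_subset_empty
      refine (iInter_subset _ N₀).trans ?_
      simp only [iUnion_subset_iff]
      intro i hi
      rw [hempty i hi]
    have hUempty : (⋂ N : ℕ, ⋃ i : ℕ, ⋃ _ : N ≤ i, U i) = ∅ := by
      apply eq_empty_of_subset_empty
      refine (iInter_subset _ N₀).trans ?_
      simp only [iUnion_subset_iff]
      intro i hi
      exact (hsub i).trans (by rw [hempty i hi])
    rw [hBempty, hUempty]
  -- main case `1 ≤ k`
  haveI : NeZero k := ⟨hk.ne'⟩
  set B : ℕ → Set (Fin k → ℝ) := fun i => ball (x i) (r i) with hB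
  set Z : ℕ → Set (Fin k → ℝ) := fun N => ⋃ i : ℕ, ⋃ _ : N ≤ i, U i with hZ
  set LB : Set (Fin k → ℝ) := ⋂ N : ℕ, ⋃ i : ℕ, ⋃ _ : N ≤ i, B i with hLB
  have key : ∀ N, volume (LB \ Z N) = 0 := by
    intro N
    by_contra contra
    set W : Set (Fin k → ℝ) := LB \ Z N with hW
    obtain ⟨d, hd, hd'⟩ : ∃ d, d ∈ W ∧ ∀ {ι : Type} {l : Filter ι} (w : ι → (Fin k → ℝ))
        (δ : ι → ℝ), Tendsto δ l (𝓝[>] 0) → (∀ᶠ j in l, d ∈ closedBall (w j) (2 * δ j)) →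
        Tendsto (fun j => volume (W ∩ closedBall (w j) (δ j)) / volume (closedBall (w j) (δ j)))
          l (𝓝 1) :=
      Measure.exists_mem_of_measure_ne_zero_of_ae contra
        (IsUnifLocDoublingMeasure.ae_tendsto_measure_inter_div volume W 2)
    have hdLB : d ∈ LB := hd.1
    have hdZ : d ∉ Z N := hd.2
    -- extract a subsequence of balls containing `d`
    have hex : ∀ j : ℕ, ∃ i : ℕ, max j N ≤ i ∧ d ∈ B i := by
      intro j
      have := mem_iInter.mp hdLB (max j N)
      simpa using this
    choose f hf₁ hf₂ using hex
    have hfj : ∀ j, j ≤ f j := fun j => (le_max_left _ _).trans (hf₁ j)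
    have hfN : ∀ j, N ≤ f j := fun j => (le_max_right _ _).trans (hf₁ j)
    have hrpos : ∀ j, 0 < r (f j) := fun j =>
      pos_of_mem_ball (hf₂ j)
    have hftend : Tendsto f atTop atTop := tendsto_atTop_mono hfj tendsto_id
    have hvol : Tendsto (fun j => volume (B (f j))) atTop (𝓝 0) := htend.comp hftend
    -- radii tend to zero
    set v : ℝ≥0∞ := volume (ball (0 : Fin k → ℝ) 1) with hv
    have hv0 : v ≠ 0 := (measure_ball_pos volume 0 one_pos).ne'
    have hvtop : v ≠ ⊤ := measure_ball_lt_top.ne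
    have hballvol : ∀ j, volume (B (f j)) = ENNReal.ofReal (r (f j) ^ k) * v := by
      intro j
      rw [hB]
      rw [Measure.addHaar_ball_of_pos volume _ (hrpos j), Module.finrank_fin_fun]
    have hofreal : Tendsto (fun j => ENNReal.ofReal (r (f j) ^ k)) atTop (𝓝 0) := by
      have h := ENNReal.Tendsto.mul_const hvol (Or.inr (ENNReal.inv_ne_top.mpr hv0))
      rw [zero_mul] at h
      refine h.congr fun j => ?_
      rw [hballvol j, mul_assoc, ENNReal.mul_inv_cancel hv0 hvtop, mul_one]
    have hpowtend : Tendsto (fun j => r (f j) ^ k) atTop (𝓝 0) := by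
      have := (ENNReal.tendsto_toReal (by simp)).comp hofreal
      refine this.congr fun j => ?_
      simp [ENNReal.toReal_ofReal (pow_nonneg (hrpos j).le k)]
    have hrtend : Tendsto (fun j => r (f j)) atTop (𝓝[>] 0) := by
      rw [tendsto_nhdsWithin_iff]
      constructor
      · rw [tendsto_order]
        constructor
        · intro a ha
          exact Eventually.of_forall fun j => ha.trans (hrpos j)
        · intro a ha
          have : ∀ᶠ j in atTop, r (f j) ^ k < a ^ k :=
            hpowtend.eventually_lt_const (pow_pos ha k)
          exact this.mono fun j hj => lt_of_pow_lt_pow_left₀ k ha.le hj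
      · exact Eventually.of_forall fun j => hrpos j
    have hdball : ∀ᶠ j in atTop, d ∈ closedBall (x (f j)) (2 * r (f j)) :=
      Eventually.of_forall fun j => closedBall_subset_closedBall
        (by nlinarith [hrpos j]) (ball_subset_closedBall (hf₂ j))
    have hlim := hd' (fun j => x (f j)) (fun j => r (f j)) hrtend hdball
    -- the ratio is bounded away from 1
    have hub : ∀ j, volume (W ∩ closedBall (x (f j)) (r (f j))) /
        volume (closedBall (x (f j)) (r (f j))) ≤ 1 - ENNReal.ofReal c := by
      intro j
      set t := volume (closedBall (x (f j)) (r (f j))) with ht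
      have httop : t ≠ ⊤ := measure_closedBall_lt_top.ne
      have htball : t = volume (B (f j)) :=
        Measure.addHaar_closedBall_eq_addHaar_ball volume _ _
      have hdisj : Disjoint (U (f j)) (W ∩ closedBall (x (f j)) (r (f j))) := by
        rw [Set.disjoint_left]
        intro a ha ha'
        have haZ : a ∈ Z N := mem_iUnion.mpr ⟨f j, mem_iUnion.mpr ⟨hfN j, ha⟩⟩
        exact ha'.1.2 haZ
      have hsum : volume (U (f j)) + volume (W ∩ closedBall (x (f j)) (r (f j))) ≤ t := by
        rw [← measure_union' hdisj (hUmeas (f j))]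
        refine measure_mono (union_subset ?_ inter_subset_right)
        exact (hsub (f j)).trans ball_subset_closedBall
      have hc' : ENNReal.ofReal c * t ≤ volume (U (f j)) := by
        rw [htball]; exact hmeas (f j)
      have hcttop : ENNReal.ofReal c * t ≠ ⊤ := ENNReal.mul_ne_top ENNReal.ofReal_ne_top httop
      have h3 : ENNReal.ofReal c * t + volume (W ∩ closedBall (x (f j)) (r (f j))) ≤ t :=
        le_trans (add_le_add hc' le_rfl) hsum
      have h4 : volume (W ∩ closedBall (x (f j)) (r (f j))) ≤ t - ENNReal.ofReal c * t := by
        have := tsub_le_tsub_right h3 (ENNReal.ofReal c * t)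
        rwa [ENNReal.add_sub_cancel_left hcttop] at this
      apply ENNReal.div_le_of_le_mul
      rwa [ENNReal.sub_mul fun _ _ => httop, one_mul]
    have hle : (1 : ℝ≥0∞) ≤ 1 - ENNReal.ofReal c :=
      le_of_tendsto hlim (Eventually.of_forall hub)
    have hlt : (1 : ℝ≥0∞) - ENNReal.ofReal c < 1 :=
      ENNReal.sub_lt_self ENNReal.one_ne_top one_ne_zero
        (by simpa using hc)
    exact absurd (lt_of_le_of_lt hle hlt) (lt_irrefl _)
  -- conclude
  have hsubset : (⋂ N : ℕ, ⋃ i : ℕ, ⋃ _ : N ≤ i, U i) ⊆ LB :=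
    iInter_mono fun N => iUnion_mono fun i => iUnion_mono fun _ => hsub i
  refine le_antisymm (measure_mono hsubset) ?_
  have hdiff : volume (LB \ ⋂ N, Z N) = 0 := by
    rw [diff_iInter]
    exact measure_iUnion_null key
  calc volume LB ≤ volume ((⋂ N, Z N) ∪ (LB \ ⋂ N, Z N)) :=
        measure_mono fun a ha => by
          by_cases h : a ∈ ⋂ N, Z N
          · exact Or.inl h
          · exact Or.inr ⟨ha, h⟩
    _ ≤ volume (⋂ N, Z N) + volume (LB \ ⋂ N, Z N) := measure_union_le _ _
    _ = volume (⋂ N, Z N) := by rw [hdiff, add_zero]
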